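/- arXiv:2009.08817 — 3 statements merged into one kernel-verified Lean document; each statement's English description precedes it below -/
import Mathlib

section
/- Let (X,d) and (M,d) be metric spaces, K ⊆ X nonempty, F : X×X×X×M → ℝ, and let S(μ) = {u ∈ K : F(u,z,u;μ) ≥ 0 for all z ∈ K} be the solution map. Fix μ̄ ∈ M and ū ∈ S(μ̄). Suppose there exist a neighborhood U of μ̄, a neighborhood V of ū and constants m > 0, β > 0, ξ > 0, θ ≥ 0, b > 0, c ≥ 0 with θ < β and c < m such that: (i) m·d(ū,v)^β ≤ F(ū,v,ū;μ̄)_− + F(ū,v,v;μ̄)_+ for all v ∈ S(μ) ∩ V and μ ∈ U; (ii) F(ū,v,v;μ̄) ≤ c·d(ū,v)^β + b·d(ū,v)^θ·d(μ,μ̄)^ξ for all μ ∈ U and v ∈ S(μ) ∩ V with v ≠ ū. Then for every μ ∈ U and every v ∈ S(μ) ∩ V one has d(v, ū) ≤ (b/(m−c))^{1/(β−θ)} · d(μ, μ̄)^{ξ/(β−θ)}. In particular, S is isolated Hölder calm at (μ̄, ū) and ū is the unique solution of S(μ̄) in V. -/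
open Filter

/-- Main calmness theorem, case `a = 0`: under the strong-monotonicity-type estimate (i)
and the apriori estimate (ii) with `θ < β` and `c < m`, every local solution `v ∈ S(μ)`
satisfies `d(v,u₀) ≤ (b/(m−c))^(1/(β−θ)) · d(μ,μ₀)^(ξ/(β−θ))`; in particular `S` is
isolated Hölder calm at `(μ₀, u₀)` and `u₀` is the unique solution in `V`. -/
theorem calmness_case_a_zero {X M : Type*} [MetricSpace X] [MetricSpace M]
    (K : Set X) (hK : K.Nonempty) (F : X → X → X → M → ℝ)
    (S : M → Set X) (hS : ∀ μ, S μ = {u ∈ K | ∀ z ∈ K, 0 ≤ F u z u μ})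
    (μ₀ : M) (u₀ : X) (hu₀ : u₀ ∈ S μ₀)
    (U : Set M) (hU : U ∈ nhds μ₀) (V : Set X) (hV : V ∈ nhds u₀)
    (m β ξ b : ℝ) (θ c : ℝ)
    (hm : 0 < m) (hβ : 0 < β) (hξ : 0 < ξ) (hb : 0 < b)
    (hθ : 0 ≤ θ) (hc : 0 ≤ c) (hθβ : θ < β) (hcm : c < m)
    (hi : ∀ μ ∈ U, ∀ v ∈ S μ ∩ V,
      m * dist u₀ v ^ β ≤ max (-(F u₀ v u₀ μ₀)) 0 + max (F u₀ v v μ₀) 0)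
    (hii : ∀ μ ∈ U, ∀ v ∈ S μ ∩ V, v ≠ u₀ →
      F u₀ v v μ₀ ≤ c * dist u₀ v ^ β + b * dist u₀ v ^ θ * dist μ μ₀ ^ ξ) :
    (∀ μ ∈ U, ∀ v ∈ S μ ∩ V,
      dist v u₀ ≤ (b / (m - c)) ^ (1 / (β - θ)) * dist μ μ₀ ^ (ξ / (β - θ))) ∧
    (∀ v ∈ S μ₀ ∩ V, v = u₀) := by
  have hβθ : 0 < β - θ := by linarith
  have hmc : 0 < m - c := by linarith
  have hmain : ∀ μ ∈ U, ∀ v ∈ S μ ∩ V,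
      dist v u₀ ≤ (b / (m - c)) ^ (1 / (β - θ)) * dist μ μ₀ ^ (ξ / (β - θ)) := by
    intro μ hμ v hv
    by_cases hvu : v = u₀
    · subst hvu
      rw [dist_self]
      have : (0:ℝ) ≤ b / (m - c) := le_of_lt (div_pos hb hmc)
      positivity
    · set d := dist u₀ v with hd_def
      have hd : 0 < d := by
        rw [hd_def, dist_pos]
        exact fun h => hvu h.symm
      set D := dist μ μ₀ with hD_def
      have hD : 0 ≤ D := dist_nonneg
      -- u₀ solves at μ₀
      have hu₀' := (hS μ₀) ▸ hu₀
      have hvK : v ∈ K := by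
        have := (hS μ) ▸ hv.1
        exact this.1
      have hF0 : 0 ≤ F u₀ v u₀ μ₀ := hu₀'.2 v hvK
      have h1 := hi μ hμ v hv
      rw [max_eq_right (by linarith : -(F u₀ v u₀ μ₀) ≤ 0), zero_add] at h1
      have h2 := hii μ hμ v hv hvu
      have hrhs : (0:ℝ) ≤ c * d ^ β + b * d ^ θ * D ^ ξ := by positivity
      have h3 : m * d ^ β ≤ c * d ^ β + b * d ^ θ * D ^ ξ :=
        le_trans h1 (max_le h2 hrhs)
      have h4 : (m - c) * d ^ β ≤ b * d ^ θ * D ^ ξ := by linarith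
      have hsplit : d ^ β = d ^ θ * d ^ (β - θ) := by
        rw [← Real.rpow_add hd]; ring_nf
      rw [hsplit] at h4
      have hdθ : 0 < d ^ θ := Real.rpow_pos_of_pos hd θ
      have h5 : (m - c) * d ^ (β - θ) ≤ b * D ^ ξ := by
        calc (m - c) * d ^ (β - θ) = (m - c) * (d ^ θ * d ^ (β - θ)) / d ^ θ := by
              field_simp
          _ ≤ b * d ^ θ * D ^ ξ / d ^ θ := by
              apply div_le_div_of_nonneg_right h4 hdθ.le
          _ = b * D ^ ξ := by field_simp
      have h6 : d ^ (β - θ) ≤ (b / (m - c)) * D ^ ξ := by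
        rw [div_mul_eq_mul_div, le_div_iff₀ hmc]
        linarith [h5]
      have h7 : (d ^ (β - θ)) ^ (1 / (β - θ)) ≤ ((b / (m - c)) * D ^ ξ) ^ (1 / (β - θ)) :=
        Real.rpow_le_rpow (by positivity) h6 (by positivity)
      have hL : (d ^ (β - θ)) ^ (1 / (β - θ)) = d := by
        rw [← Real.rpow_mul hd.le, mul_one_div_cancel hβθ.ne', Real.rpow_one]
      have hR : ((b / (m - c)) * D ^ ξ) ^ (1 / (β - θ))
          = (b / (m - c)) ^ (1 / (β - θ)) * D ^ (ξ / (β - θ)) := by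
        rw [Real.mul_rpow (by positivity) (by positivity), ← Real.rpow_mul hD]
        ring_nf
      rw [hL, hR] at h7
      rw [dist_comm]
      exact h7
  refine ⟨hmain, fun v hv => ?_⟩
  have hμ₀U : μ₀ ∈ U := mem_of_mem_nhds hU
  have := hmain μ₀ hμ₀U v hv
  rw [dist_self, Real.zero_rpow (by positivity : ξ / (β - θ) ≠ 0), mul_zero] at this
  exact dist_le_zero.mp this
end

section
/- Let (X,d), (M,d) be metric spaces, K ⊆ X, and S(μ) = {u ∈ K : F(u,z,u;μ) ≥ 0 ∀z ∈ K}. Fix μ̄ ∈ M, ū ∈ S(μ̄). Suppose there exist neighborhoods U of μ̄ and Ṽ of ū and constants m, β, ξ > 0, a > 0, b > 0, c ≥ 0, θ ≥ 0, α > 0 with θ < β, c < m and β < α + θ such that (i) m·d(ū,v)^β ≤ F(ū,v,ū;μ̄)_− + F(ū,v,v;μ̄)_+ for all v ∈ S(μ) ∩ Ṽ, μ ∈ U, and (ii) F(ū,v,v;μ̄) ≤ c·d(ū,v)^β + d(ū,v)^θ·(a·d(ū,v)^α + b·d(μ,μ̄)^ξ) for all μ ∈ U and v ∈ S(μ) ∩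 Ṽ with v ≠ ū. Then for any r with 0 < r < ((m−c)/a)^{1/(α+θ−β)}, setting V = B(ū,r) ∩ Ṽ, δ = ξ/(β−θ) and k = r·(r^{β−θ} − (a/(m−c))·r^α)^{1/(θ−β)}·(b/(m−c))^{1/(β−θ)}, one has d(v, ū) ≤ k·d(μ, μ̄)^δ for all μ ∈ U and v ∈ S(μ) ∩ V. -/
open Filter Metric

/-- Main calmness theorem, case 1): `β < α + θ`, `a > 0`.  For any
`0 < r < ((m−c)/a)^(1/(α+θ−β))`, every solution `v ∈ S(μ) ∩ B(u₀,r) ∩ Vt` satisfies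
`d(v,u₀) ≤ k · d(μ,μ₀)^δ` with `δ = ξ/(β−θ)` and
`k = r·(r^(β−θ) − (a/(m−c))·r^α)^(1/(θ−β))·(b/(m−c))^(1/(β−θ))`. -/
theorem calmness_case_one {X M : Type*} [MetricSpace X] [MetricSpace M]
    (K : Set X) (F : X → X → X → M → ℝ)
    (S : M → Set X) (hS : ∀ μ, S μ = {u ∈ K | ∀ z ∈ K, 0 ≤ F u z u μ})
    (μ₀ : M) (u₀ : X) (hu₀ : u₀ ∈ S μ₀)
    (U : Set M) (hU : U ∈ nhds μ₀) (Vt : Set X) (hVt : Vt ∈ nhds u₀)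
    (m β ξ a b α : ℝ) (θ c : ℝ)
    (hm : 0 < m) (hβ : 0 < β) (hξ : 0 < ξ) (ha : 0 < a) (hb : 0 < b) (hα : 0 < α)
    (hθ : 0 ≤ θ) (hc : 0 ≤ c) (hθβ : θ < β) (hcm : c < m) (hβαθ : β < α + θ)
    (hi : ∀ μ ∈ U, ∀ v ∈ S μ ∩ Vt,
      m * dist u₀ v ^ β ≤ max (-(F u₀ v u₀ μ₀)) 0 + max (F u₀ v v μ₀) 0)
    (hii : ∀ μ ∈ U, ∀ v ∈ S μ ∩ Vt, v ≠ u₀ →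
      F u₀ v v μ₀ ≤ c * dist u₀ v ^ β +
        dist u₀ v ^ θ * (a * dist u₀ v ^ α + b * dist μ μ₀ ^ ξ)) :
    ∀ r : ℝ, 0 < r → r < ((m - c) / a) ^ (1 / (α + θ - β)) →
      ∀ μ ∈ U, ∀ v ∈ S μ ∩ (ball u₀ r ∩ Vt),
        dist v u₀ ≤
          (r * (r ^ (β - θ) - (a / (m - c)) * r ^ α) ^ (1 / (θ - β)) *
            (b / (m - c)) ^ (1 / (β - θ))) *
          dist μ μ₀ ^ (ξ / (β - θ)) := by
  intro r hr hrlt μ hμ v hv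
  obtain ⟨hvS, hvball, hvVt⟩ := hv
  have hmc : (0:ℝ) < m - c := by linarith
  have hβθ : (0:ℝ) < β - θ := by linarith
  have hαθβ : (0:ℝ) < α + θ - β := by linarith
  rw [dist_comm]
  set t := dist u₀ v with ht
  set d := dist μ μ₀ with hd
  have ht0 : 0 ≤ t := dist_nonneg
  have hd0 : 0 ≤ d := dist_nonneg
  have htr : t < r := by rw [ht, dist_comm]; exact mem_ball.mp hvball
  -- positivity of the bracket
  have hrpow : r ^ (α + θ - β) < (m - c) / a := by
    have h := Real.rpow_lt_rpow hr.le hrlt hαθβ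
    rwa [one_div, Real.rpow_inv_rpow (div_nonneg hmc.le ha.le) (ne_of_gt hαθβ)] at h
  have hrb : 0 < r ^ (β - θ) := Real.rpow_pos_of_pos hr _
  have hax : r ^ (α + θ - β) * a < m - c := (lt_div_iff₀ ha).mp hrpow
  have hrsplit : r ^ α = r ^ (α + θ - β) * r ^ (β - θ) := by
    rw [← Real.rpow_add hr]; ring_nf
  have hgr : (a / (m - c)) * r ^ α < r ^ (β - θ) := by
    rw [div_mul_eq_mul_div, div_lt_iff₀ hmc, hrsplit]
    linarith only [mul_lt_mul_of_pos_right hax hrb]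
  have hGpos : 0 < r ^ (β - θ) - (a / (m - c)) * r ^ α := sub_pos.mpr hgr
  set G := r ^ (β - θ) - (a / (m - c)) * r ^ α with hG
  have hbm : (0:ℝ) ≤ b / (m - c) := by positivity
  have hGe : 0 ≤ G ^ (1 / (θ - β)) := Real.rpow_nonneg hGpos.le _
  have hbe : 0 ≤ (b / (m - c)) ^ (1 / (β - θ)) := Real.rpow_nonneg hbm _
  have hde : 0 ≤ d ^ (ξ / (β - θ)) := Real.rpow_nonneg hd0 _
  have hKd0 : 0 ≤ (r * G ^ (1 / (θ - β)) * (b / (m - c)) ^ (1 / (β - θ))) * d ^ (ξ / (β - θ)) :=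
    mul_nonneg (mul_nonneg (mul_nonneg hr.le hGe) hbe) hde
  by_cases hvu : v = u₀
  · subst hvu
    rw [ht, dist_self]
    exact hKd0
  -- main case
  have ht' : 0 < t := dist_pos.mpr fun h => hvu h.symm
  have hvK : v ∈ K := by have h := hvS; rw [hS] at h; exact h.1
  have hF1 : 0 ≤ F u₀ v u₀ μ₀ := by
    have h := hu₀; rw [hS] at h; exact h.2 v hvK
  have htβ : 0 < t ^ β := Real.rpow_pos_of_pos ht' _
  have htθ : 0 < t ^ θ := Real.rpow_pos_of_pos ht' _
  have hF2 : m * t ^ β ≤ F u₀ v v μ₀ := by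
    have h := hi μ hμ v ⟨hvS, hvVt⟩
    rw [max_eq_right (neg_nonpos.mpr hF1), zero_add] at h
    rcases le_total (F u₀ v v μ₀) 0 with h0 | h0
    · rw [max_eq_right h0] at h; nlinarith [mul_pos hm htβ]
    · rwa [max_eq_left h0] at h
  have hchain := (hii μ hμ v ⟨hvS, hvVt⟩ hvu).trans' hF2
  have hβsplit : t ^ β = t ^ θ * t ^ (β - θ) := by
    rw [← Real.rpow_add ht']; ring_nf
  have key : (m - c) * t ^ (β - θ) ≤ a * t ^ α + b * d ^ ξ := by
    have h2 : ((m - c) * t ^ (β - θ)) * t ^ θ ≤ (a * t ^ α + b * d ^ ξ) * t ^ θ := by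
      rw [hβsplit] at hchain; linarith only [hchain]
    exact le_of_mul_le_mul_right h2 htθ
  -- comparison of powers
  have htb0 : 0 ≤ t ^ (β - θ) := Real.rpow_nonneg ht0 _
  have hcomp : t ^ α * r ^ (β - θ) ≤ r ^ α * t ^ (β - θ) := by
    have h1 : t ^ α = t ^ (α + θ - β) * t ^ (β - θ) := by
      rw [← Real.rpow_add ht']; ring_nf
    have h3 : t ^ (α + θ - β) ≤ r ^ (α + θ - β) := Real.rpow_le_rpow ht0 htr.le hαθβ.le
    rw [h1, hrsplit]
    linarith only [mul_nonneg (mul_nonneg (sub_nonneg.mpr h3) htb0) hrb.le]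
  have key2 := mul_le_mul_of_nonneg_right key hrb.le
  have hacomp := mul_le_mul_of_nonneg_left hcomp ha.le
  have hGr : ((m - c) * r ^ (β - θ) - a * r ^ α) * t ^ (β - θ) ≤ b * d ^ ξ * r ^ (β - θ) := by
    linarith only [key2, hacomp]
  have hgg : (m - c) * G = (m - c) * r ^ (β - θ) - a * r ^ α := by
    rw [hG]; field_simp
  have hstep : t ^ (β - θ) ≤ (b * d ^ ξ * r ^ (β - θ)) / ((m - c) * G) := by
    rw [le_div_iff₀ (mul_pos hmc hGpos)]
    calc t ^ (β - θ) * ((m - c) * G)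
        = ((m - c) * r ^ (β - θ) - a * r ^ α) * t ^ (β - θ) := by rw [← hgg]; ring
      _ ≤ b * d ^ ξ * r ^ (β - θ) := hGr
  -- identify the RHS of goal raised to power (β - θ)
  have hne : θ - β ≠ 0 := by linarith
  have e1 : (1 / (θ - β)) * (β - θ) = (-1 : ℝ) := by field_simp; ring
  have e2 : (1 / (β - θ)) * (β - θ) = (1 : ℝ) := by field_simp
  have e3 : (ξ / (β - θ)) * (β - θ) = ξ := by field_simp
  have hKpow : ((r * G ^ (1 / (θ - β)) * (b / (m - c)) ^ (1 / (β - θ))) * d ^ (ξ / (β - θ)))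
      ^ (β - θ) = (b * d ^ ξ * r ^ (β - θ)) / ((m - c) * G) := by
    rw [Real.mul_rpow (mul_nonneg (mul_nonneg hr.le hGe) hbe) hde,
        Real.mul_rpow (mul_nonneg hr.le hGe) hbe,
        Real.mul_rpow hr.le hGe,
        ← Real.rpow_mul hGpos.le, ← Real.rpow_mul hbm, ← Real.rpow_mul hd0,
        e1, e2, e3, Real.rpow_neg_one, Real.rpow_one]
    field_simp
  have hfinal : t ^ (β - θ) ≤
      ((r * G ^ (1 / (θ - β)) * (b / (m - c)) ^ (1 / (β - θ))) * d ^ (ξ / (β - θ))) ^ (β - θ) := by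
    rw [hKpow]; exact hstep
  calc t = (t ^ (β - θ)) ^ (β - θ)⁻¹ := (Real.rpow_rpow_inv ht0 hβθ.ne').symm
    _ ≤ (((r * G ^ (1 / (θ - β)) * (b / (m - c)) ^ (1 / (β - θ))) * d ^ (ξ / (β - θ)))
          ^ (β - θ)) ^ (β - θ)⁻¹ :=
        Real.rpow_le_rpow htb0 hfinal (inv_nonneg.mpr hβθ.le)
    _ = (r * G ^ (1 / (θ - β)) * (b / (m - c)) ^ (1 / (β - θ))) * d ^ (ξ / (β - θ)) :=
        Real.rpow_rpow_inv hKd0 hβθ.ne'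
end

section
/- Let (X,d), (M,d) be metric spaces, K ⊆ X, and S(μ) = {u ∈ K : F(u,z,u;μ) ≥ 0 ∀z ∈ K}. Fix μ̄ ∈ M, ū ∈ S(μ̄). Suppose there exist neighborhoods U of μ̄ and V of ū and constants m, β, ξ, α > 0, a > 0, b > 0, c ≥ 0, θ ≥ 0 with θ < β, β = α + θ and a + c < m such that conditions (i) and (ii) of the main theorem hold (with these constants). Then for all μ ∈ U and v ∈ S(μ) ∩ V, d(v, ū) ≤ (b/(m−c−a))^{1/(β−θ)} · d(μ, μ̄)^{ξ/(β−θ)}. -/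
open Filter

/-- Main calmness theorem, case 2): `β = α + θ`, `a + c < m`.  Every solution
`v ∈ S(μ) ∩ V` satisfies `d(v,u₀) ≤ (b/(m−c−a))^(1/(β−θ)) · d(μ,μ₀)^(ξ/(β−θ))`. -/
theorem calmness_case_two {X M : Type*} [MetricSpace X] [MetricSpace M]
    (K : Set X) (F : X → X → X → M → ℝ)
    (S : M → Set X) (hS : ∀ μ, S μ = {u ∈ K | ∀ z ∈ K, 0 ≤ F u z u μ})
    (μ₀ : M) (u₀ : X) (hu₀ : u₀ ∈ S μ₀)
    (U : Set M) (hU : U ∈ nhds μ₀) (V : Set X) (hV : V ∈ nhds u₀)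
    (m β ξ α a b : ℝ) (θ c : ℝ)
    (hm : 0 < m) (hβ : 0 < β) (hξ : 0 < ξ) (hα : 0 < α) (ha : 0 < a) (hb : 0 < b)
    (hθ : 0 ≤ θ) (hc : 0 ≤ c) (hθβ : θ < β) (hβeq : β = α + θ) (hacm : a + c < m)
    (hi : ∀ μ ∈ U, ∀ v ∈ S μ ∩ V,
      m * dist u₀ v ^ β ≤ max (-(F u₀ v u₀ μ₀)) 0 + max (F u₀ v v μ₀) 0)
    (hii : ∀ μ ∈ U, ∀ v ∈ S μ ∩ V, v ≠ u₀ →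
      F u₀ v v μ₀ ≤ c * dist u₀ v ^ β +
        dist u₀ v ^ θ * (a * dist u₀ v ^ α + b * dist μ μ₀ ^ ξ)) :
    ∀ μ ∈ U, ∀ v ∈ S μ ∩ V,
      dist v u₀ ≤ (b / (m - c - a)) ^ (1 / (β - θ)) * dist μ μ₀ ^ (ξ / (β - θ)) := by
  intro μ hμ v hv
  set t := dist u₀ v with ht
  set r := dist μ μ₀ with hr
  have hr0 : 0 ≤ r := dist_nonneg
  have hmca : 0 < m - c - a := by linarith
  have hRHSpos : 0 < (b / (m - c - a)) ^ (1 / (β - θ)) :=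
    Real.rpow_pos_of_pos (div_pos hb hmca) _
  by_cases hvu : v = u₀
  · subst hvu
    simp only [dist_self]
    positivity
  -- v ≠ u₀, so t > 0
  have ht0 : 0 < t := dist_pos.mpr (Ne.symm hvu)
  -- first max term vanishes
  have hvK : v ∈ K := by
    have := hv.1; rw [hS] at this; exact this.1
  have hF1 : 0 ≤ F u₀ v u₀ μ₀ := by
    rw [hS] at hu₀; exact hu₀.2 v hvK
  have hmax1 : max (-(F u₀ v u₀ μ₀)) 0 = 0 := max_eq_right (by linarith)
  have hiineq := hi μ hμ v hv
  rw [hmax1, zero_add] at hiineq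
  have hbound : c * t ^ β + t ^ θ * (a * t ^ α + b * r ^ ξ) =
      c * t ^ β + a * t ^ β + t ^ θ * (b * r ^ ξ) := by
    rw [hβeq, Real.rpow_add ht0]; ring
  have hRHSnn : 0 ≤ c * t ^ β + t ^ θ * (a * t ^ α + b * r ^ ξ) := by positivity
  have h2 : m * t ^ β ≤ c * t ^ β + a * t ^ β + t ^ θ * (b * r ^ ξ) := by
    rw [← hbound]
    exact hiineq.trans (max_le (hii μ hμ v hv hvu) hRHSnn)
  have htβ : t ^ β = t ^ (β - θ) * t ^ θ := by
    rw [← Real.rpow_add ht0]; ring_nf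
  have h3 : (m - c - a) * t ^ (β - θ) * t ^ θ ≤ b * r ^ ξ * t ^ θ := by
    nlinarith [h2, htβ, Real.rpow_pos_of_pos ht0 θ]
  have htθ : 0 < t ^ θ := Real.rpow_pos_of_pos ht0 θ
  have h4 : (m - c - a) * t ^ (β - θ) ≤ b * r ^ ξ :=
    le_of_mul_le_mul_right h3 htθ
  have h5 : t ^ (β - θ) ≤ (b / (m - c - a)) * r ^ ξ := by
    rw [div_mul_eq_mul_div, le_div_iff₀ hmca]; linarith
  have hβθ : 0 < β - θ := by linarith
  have h6 : (t ^ (β - θ)) ^ (1 / (β - θ)) ≤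
      ((b / (m - c - a)) * r ^ ξ) ^ (1 / (β - θ)) :=
    Real.rpow_le_rpow (le_of_lt (Real.rpow_pos_of_pos ht0 _)) h5 (by positivity)
  have hL : (t ^ (β - θ)) ^ (1 / (β - θ)) = t := by
    rw [← Real.rpow_mul ht0.le, mul_one_div, div_self hβθ.ne', Real.rpow_one]
  have hR : ((b / (m - c - a)) * r ^ ξ) ^ (1 / (β - θ)) =
      (b / (m - c - a)) ^ (1 / (β - θ)) * r ^ (ξ / (β - θ)) := by
    rw [Real.mul_rpow (by positivity) (by positivity), ← Real.rpow_mul hr0,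
      mul_one_div]
  rw [hL, hR] at h6
  rw [dist_comm]
  exact h6
end
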